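/- arXiv:2309.14501 — 2 statements merged into one kernel-verified Lean document; each statement's English description precedes it below -/
import Mathlib

section
/- For every odd prime p and every positive integer e, there exists an integer r with 0 ≤ r ≤ e - 1 such that z(p^e) = p^r·z(p). -/
open Nat

/-- The order of appearance of `n` in the Fibonacci sequence: the smallest
positive integer `ℓ` such that `n` divides the `ℓ`-th Fibonacci number. -/
noncomputable def z (n : ℕ) : ℕ := sInf {ℓ : ℕ | 0 < ℓ ∧ n ∣ Nat.fib ℓ}


private lemma fib_pair_back (n : ℕ) : ∀ i j : ℕ, i ≤ j →
    ((fib i : ZMod n) = fib j ∧ (fib (i+1) : ZMod n) = fib (j+1)) →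
    ((fib 0 : ZMod n) = fib (j - i) ∧ (fib 1 : ZMod n) = fib (j - i + 1)) := by
  intro i
  induction i with
  | zero => intro j _ h; simpa using h
  | succ i ih =>
    intro j hij h
    obtain ⟨j', rfl⟩ : ∃ j', j = j' + 1 := ⟨j - 1, by omega⟩
    have h1 : (fib (i+1) : ZMod n) = fib (j'+1) := h.1
    have h2 : (fib (i+2) : ZMod n) = fib (j'+2) := h.2
    have h0 : (fib i : ZMod n) = fib j' := by
      have e1 : (fib (i+2) : ZMod n) = fib i + fib (i+1) := by
        rw [fib_add_two]; push_cast; ring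
      have e2 : (fib (j'+2) : ZMod n) = fib j' + fib (j'+1) := by
        rw [fib_add_two]; push_cast; ring
      rw [e1, e2, h1] at h2
      exact add_right_cancel h2
    have := ih j' (by omega) ⟨h0, h1⟩
    simpa [Nat.succ_sub_succ] using this

private lemma exists_pos_fib_dvd (n : ℕ) (hn : 0 < n) : ∃ ℓ, 0 < ℓ ∧ n ∣ fib ℓ := by
  haveI : NeZero n := ⟨hn.ne'⟩
  obtain ⟨i, j, hne, hf⟩ := Finite.exists_ne_map_eq_of_infinite
    (fun k : ℕ => ((fib k : ZMod n), (fib (k+1) : ZMod n)))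
  rcases hne.lt_or_gt with hij | hij
  · have := fib_pair_back n i j hij.le ⟨congrArg Prod.fst hf, congrArg Prod.snd hf⟩
    refine ⟨j - i, by omega, ?_⟩
    have : ((fib (j - i) : ℕ) : ZMod n) = 0 := by
      have := this.1; simpa using this.symm
    exact (ZMod.natCast_eq_zero_iff _ _).1 this
  · have := fib_pair_back n j i hij.le
      ⟨(congrArg Prod.fst hf).symm, (congrArg Prod.snd hf).symm⟩
    refine ⟨i - j, by omega, ?_⟩
    have : ((fib (i - j) : ℕ) : ZMod n) = 0 := by
      have := this.1; simpa using this.symm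
    exact (ZMod.natCast_eq_zero_iff _ _).1 this

private lemma z_mem (n : ℕ) (hn : 0 < n) : 0 < z n ∧ n ∣ fib (z n) := by
  obtain ⟨ℓ, hℓ⟩ := exists_pos_fib_dvd n hn
  exact Nat.sInf_mem (⟨ℓ, hℓ⟩ : Set.Nonempty {ℓ : ℕ | 0 < ℓ ∧ n ∣ fib ℓ})

private lemma z_dvd_of_dvd_fib {n ℓ : ℕ} (hn : 0 < n) (hℓ : 0 < ℓ) (h : n ∣ fib ℓ) :
    z n ∣ ℓ := by
  have hz := z_mem n hn
  have hg : n ∣ fib (Nat.gcd (z n) ℓ) := by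
    rw [Nat.fib_gcd]; exact Nat.dvd_gcd hz.2 h
  have hgpos : 0 < Nat.gcd (z n) ℓ := Nat.gcd_pos_of_pos_right _ hℓ
  have hle : z n ≤ Nat.gcd (z n) ℓ := Nat.sInf_le ⟨hgpos, hg⟩
  have hdvd : Nat.gcd (z n) ℓ ∣ z n := Nat.gcd_dvd_left _ _
  have heq : Nat.gcd (z n) ℓ = z n := Nat.le_antisymm (Nat.le_of_dvd hz.1 hdvd) hle
  rw [← heq]; exact Nat.gcd_dvd_right _ _

private lemma fib_mul_modEq (m : ℕ) (hm : 0 < m) : ∀ k : ℕ,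
    fib (k * m) ≡ k * fib m * fib (m+1) ^ (k-1) [MOD fib m ^ 2] ∧
    fib (k * m + 1) ≡ fib (m+1) ^ k [MOD fib m ^ 2] := by
  intro k
  induction k with
  | zero => simp [Nat.ModEq.refl]
  | succ k ih =>
    obtain ⟨hA, hB⟩ := ih
    obtain ⟨m', rfl⟩ : ∃ m', m = m' + 1 := ⟨m - 1, by omega⟩
    set F := fib (m'+1) with hF
    set G := fib (m'+2) with hG
    set A := fib (k * (m'+1)) with hAdef
    set B := fib (k * (m'+1) + 1) with hBdef
    have hFA : F ∣ A := fib_dvd _ _ ⟨k, (mul_comm _ _)⟩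
    obtain ⟨a, ha⟩ := hFA
    -- the two fib_add expansions
    have e1 : fib ((k+1) * (m'+1)) = A * fib m' + B * F := by
      have : (k+1) * (m'+1) = k * (m'+1) + m' + 1 := by ring
      rw [this, fib_add]
    have e2 : fib ((k+1) * (m'+1) + 1) = A * F + B * G := by
      have : (k+1) * (m'+1) + 1 = k * (m'+1) + (m'+1) + 1 := by ring
      rw [this, fib_add]
    constructor
    · rw [e1]
      -- A * fib m' ≡ A * G  [MOD F^2]
      have hmG : fib m' ≡ G [MOD F] := by
        show fib m' % F = G % F
        rw [hG, fib_add_two, Nat.add_mod_right]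
      have step1 : A * fib m' ≡ A * G [MOD F ^ 2] := by
        have := (hmG.mul_left a).mul_left' F
        simpa [ha, sq, mul_assoc] using this
      have step2 : A * G ≡ k * F * G ^ (k-1) * G [MOD F ^ 2] := hA.mul_right G
      have step3 : B * F ≡ G ^ k * F [MOD F ^ 2] := hB.mul_right F
      have harith : k * F * G ^ (k-1) * G + G ^ k * F = (k+1) * F * G ^ ((k+1)-1) := by
        cases k with
        | zero => simp
        | succ k' => simp only [Nat.succ_sub_one, pow_succ]; ring
      calc A * fib m' + B * F ≡ A * G + B * F [MOD F ^ 2] := step1.add_right _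
        _ ≡ k * F * G ^ (k-1) * G + G ^ k * F [MOD F ^ 2] := step2.add step3
        _ = (k+1) * F * G ^ ((k+1)-1) := harith
    · rw [e2]
      have step1 : A * F ≡ 0 [MOD F ^ 2] := by
        refine (Nat.modEq_zero_iff_dvd).2 ?_
        rw [ha, sq]; exact mul_dvd_mul_right (Dvd.intro a rfl) F
      have step2 : B * G ≡ G ^ k * G [MOD F ^ 2] := hB.mul_right G
      calc A * F + B * G ≡ 0 + G ^ k * G [MOD F ^ 2] := step1.add step2
        _ = G ^ (k+1) := by rw [zero_add, pow_succ]

private lemma pow_dvd_fib_aux (p : ℕ) (hp : p.Prime) :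
    ∀ e, 0 < e → p ^ e ∣ fib (p ^ (e-1) * z p) := by
  intro e
  induction e with
  | zero => omega
  | succ e ih =>
    intro _
    rcases Nat.eq_zero_or_pos e with rfl | hepos
    · simpa using (z_mem p hp.pos).2
    have hMdvd : p ^ e ∣ fib (p ^ (e-1) * z p) := ih hepos
    set M := p ^ (e-1) * z p with hM
    have hMpos : 0 < M := Nat.mul_pos (pow_pos hp.pos _) (z_mem p hp.pos).1
    have hkey := (fib_mul_modEq M hMpos p).1
    -- p^(e+1) divides both p * fib M * _ and fib M ^ 2
    have hd1 : p ^ (e+1) ∣ p * fib M * fib (M+1) ^ (p-1) := by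
      have : p ^ (e+1) ∣ p * fib M := by
        rw [pow_succ]
        calc p ^ e * p ∣ fib M * p := mul_dvd_mul_right hMdvd p
          _ = p * fib M := mul_comm _ _
      exact this.mul_right _
    have hd2 : p ^ (e+1) ∣ fib M ^ 2 := by
      calc p ^ (e+1) ∣ p ^ (2*e) := pow_dvd_pow p (by omega)
        _ = (p ^ e) ^ 2 := by rw [← pow_mul, mul_comm]
        _ ∣ fib M ^ 2 := pow_dvd_pow_of_dvd hMdvd 2
    have hdvd : p ^ (e+1) ∣ fib (p * M) := by
      have h1 : (↑(fib M ^ 2) : ℤ) ∣ ↑(p * fib M * fib (M+1) ^ (p-1)) - ↑(fib (p * M)) :=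
        hkey.dvd
      have h2 : ((p:ℤ) ^ (e+1)) ∣ ↑(p * fib M * fib (M+1) ^ (p-1)) - ↑(fib (p * M)) := by
        refine dvd_trans ?_ h1
        exact_mod_cast (Int.natCast_dvd_natCast.2 hd2)
      have hd1' : ((p:ℤ) ^ (e+1)) ∣ (↑(p * fib M * fib (M+1) ^ (p-1)) : ℤ) := by
        exact_mod_cast Int.natCast_dvd_natCast.2 hd1
      have h3 : ((p:ℤ) ^ (e+1)) ∣ (fib (p * M) : ℤ) := by
        have := _root_.dvd_sub hd1' h2
        simpa using this
      exact_mod_cast h3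
    have hPM : p * M = p ^ ((e+1)-1) * z p := by
      rw [hM, Nat.succ_sub_one, ← mul_assoc]
      congr 1
      rw [← pow_succ']
      congr 1
      omega
    rwa [hPM] at hdvd

theorem z_prime_pow_eq (p e : ℕ) (hp : p.Prime) (hodd : Odd p) (he : 0 < e) :
    ∃ r : ℕ, r ≤ e - 1 ∧ z (p ^ e) = p ^ r * z p := by
  have hzp := z_mem p hp.pos
  have hpe : 0 < p ^ e := pow_pos hp.pos e
  have hdvd : p ^ e ∣ fib (p ^ (e-1) * z p) := pow_dvd_fib_aux p hp e he
  have h1 : z (p ^ e) ∣ p ^ (e-1) * z p :=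
    z_dvd_of_dvd_fib hpe (Nat.mul_pos (pow_pos hp.pos _) hzp.1) hdvd
  have hze := z_mem (p ^ e) hpe
  have h2 : z p ∣ z (p ^ e) :=
    z_dvd_of_dvd_fib hp.pos hze.1 ((dvd_pow_self p he.ne').trans hze.2)
  obtain ⟨t, ht⟩ := h2
  obtain ⟨k, hk⟩ := h1
  have htk : t * k = p ^ (e-1) := by
    have : z p * (t * k) = z p * p ^ (e-1) := by
      rw [ht] at hk; rw [← mul_assoc, ← hk]; ring
    exact Nat.eq_of_mul_eq_mul_left hzp.1 this
  have htdvd : t ∣ p ^ (e-1) := ⟨k, htk.symm⟩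
  obtain ⟨r, hr, rfl⟩ := (Nat.dvd_prime_pow hp).1 htdvd
  exact ⟨r, hr, by rw [ht, mul_comm]⟩
end

section
/- For every positive integer a, there exists a non-negative integer k such that z^k(2^a) = 12. -/
lemma z_spec (n L : ℕ) (hL : 0 < L) (hfib : n ∣ Nat.fib L) :
    (0 < z n ∧ n ∣ Nat.fib (z n)) ∧ ∀ m, 0 < m → n ∣ Nat.fib m → z n ∣ m := by
  have hne : {ℓ : ℕ | 0 < ℓ ∧ n ∣ Nat.fib ℓ}.Nonempty := ⟨L, hL, hfib⟩
  have hmem := Nat.sInf_mem hne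
  refine ⟨hmem, fun m hm hdvd => ?_⟩
  set g := Nat.gcd (z n) m with hg
  have hgpos : 0 < g := Nat.gcd_pos_of_pos_left _ hmem.1
  have hgfib : n ∣ Nat.fib g := by
    rw [hg, Nat.fib_gcd]
    exact Nat.dvd_gcd hmem.2 hdvd
  have h1 : z n ≤ g := Nat.sInf_le ⟨hgpos, hgfib⟩
  have h2 : g ≤ z n := Nat.le_of_dvd hmem.1 (Nat.gcd_dvd_left _ _)
  have : g = z n := le_antisymm h2 h1
  rw [← this, hg]
  exact Nat.gcd_dvd_right _ _

lemma z_eq (n L d₁ d₂ : ℕ) (hL : 0 < L) (hfib : n ∣ Nat.fib L)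
    (hsplit : ∀ d, d ∣ L → d ≠ L → d ∣ d₁ ∨ d ∣ d₂)
    (h1 : ¬ n ∣ Nat.fib d₁) (h2 : ¬ n ∣ Nat.fib d₂) : z n = L := by
  obtain ⟨⟨hpos, hzfib⟩, hmin⟩ := z_spec n L hL hfib
  have hdvd : z n ∣ L := hmin L hL hfib
  by_contra hne
  rcases hsplit _ hdvd hne with h | h
  · exact h1 (dvd_trans hzfib (Nat.fib_dvd _ _ h))
  · exact h2 (dvd_trans hzfib (Nat.fib_dvd _ _ h))

lemma cassini (k : ℕ) :
    (Nat.fib (k+1) : ℤ)^2 - Nat.fib (k+1) * Nat.fib k - (Nat.fib k)^2 = (-1)^k := by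
  induction k with
  | zero => simp
  | succ k ih =>
    have h : (Nat.fib (k+1+1) : ℤ) = Nat.fib (k+1) + Nat.fib k := by
      rw [show k+1+1 = k+2 from rfl, Nat.fib_add_two]; push_cast; ring
    rw [h, pow_succ]
    linear_combination (-1 : ℤ) * ih

lemma fib_cast_two_mul (k : ℕ) :
    (Nat.fib (2*k) : ℤ) = Nat.fib k * (2 * Nat.fib (k+1) - Nat.fib k) := by
  have hle : Nat.fib k ≤ 2 * Nat.fib (k+1) := by
    have h1 : Nat.fib k ≤ Nat.fib (k+1) := Nat.fib_mono (by omega)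
    omega
  rw [Nat.fib_two_mul, Nat.cast_mul, Nat.cast_sub hle]
  push_cast; ring

lemma c_val (s : ℕ) :
    ∃ w : ℤ, Odd w ∧ 2 * (Nat.fib (3*2^(s+1)+1) : ℤ) - Nat.fib (3*2^(s+1)) = 2*w := by
  induction s with
  | zero =>
    refine ⟨9, ⟨4, by ring⟩, ?_⟩
    rw [show (3*2^(0+1)) = 6 from by norm_num]
    norm_num [show Nat.fib 7 = 13 from by decide, show Nat.fib 6 = 8 from by decide]
  | succ s ih =>
    obtain ⟨w, hw, hcw⟩ := ih
    set k := 3 * 2^(s+1) with hk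
    have hkeven : (-1 : ℤ)^k = 1 := by
      apply Even.neg_one_pow
      exact ⟨3 * 2^s, by rw [hk]; ring⟩
    have h2k : 3 * 2^(s+1+1) = 2 * k := by rw [hk]; ring
    refine ⟨2*w^2 - 1, ⟨w^2 - 1, by ring⟩, ?_⟩
    rw [h2k]
    have hfib2k1 : (Nat.fib (2*k+1) : ℤ) = (Nat.fib (k+1):ℤ)^2 + (Nat.fib k:ℤ)^2 := by
      rw [Nat.fib_two_mul_add_one]; push_cast; ring
    have hfib2k := fib_cast_two_mul k
    have hcas := cassini k
    rw [hkeven] at hcas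
    rw [hfib2k1, hfib2k]
    nlinarith [hcw, hcas]

lemma fib_val (s : ℕ) :
    ∃ u : ℤ, Odd u ∧ (Nat.fib (3*2^(s+1)) : ℤ) = 2^(s+3) * u := by
  induction s with
  | zero =>
    refine ⟨1, odd_one, ?_⟩
    rw [show (3*2^(0+1)) = 6 from by norm_num]
    norm_num [show Nat.fib 6 = 8 from by decide]
  | succ s ih =>
    obtain ⟨u, hu, hfu⟩ := ih
    obtain ⟨w, hw, hcw⟩ := c_val s
    set k := 3 * 2^(s+1) with hk
    have h2k : 3 * 2^(s+1+1) = 2 * k := by rw [hk]; ring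
    refine ⟨u * w, hu.mul hw, ?_⟩
    rw [h2k, fib_cast_two_mul k, hcw, hfu]
    ring

lemma two_pow_dvd (s : ℕ) : 2^(s+3) ∣ Nat.fib (3*2^(s+1)) := by
  obtain ⟨u, hu, hfu⟩ := fib_val s
  have : (2:ℤ)^(s+3) ∣ (Nat.fib (3*2^(s+1)) : ℤ) := ⟨u, hfu⟩
  exact_mod_cast this

lemma not_two_pow_dvd (s : ℕ) : ¬ 2^(s+4) ∣ Nat.fib (3*2^(s+1)) := by
  obtain ⟨u, hu, hfu⟩ := fib_val s
  intro hdvd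
  have h : (2:ℤ)^(s+4) ∣ (Nat.fib (3*2^(s+1)) : ℤ) := by exact_mod_cast hdvd
  rw [hfu] at h
  obtain ⟨c, hc⟩ := h
  have hcancel : u = 2 * c := by
    have hne : (2:ℤ)^(s+3) ≠ 0 := by positivity
    apply mul_left_cancel₀ hne
    rw [hc]; ring
  rw [Int.odd_iff, hcancel] at hu
  omega

lemma z_two : z 2 = 3 := by
  apply z_eq 2 3 1 1
  · norm_num
  · decide
  · intro d hd hne
    have := Nat.le_of_dvd (by norm_num) hd
    interval_cases d <;> first | (revert hd; decide) | (exact absurd rfl hne)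
  · decide
  · decide

lemma fib_pow_two_odd (s : ℕ) : ¬ 2 ∣ Nat.fib (2^s) := by
  intro h
  have hpos : 0 < 2^s := Nat.pow_pos (by norm_num)
  have := (z_spec 2 3 (by norm_num) (by decide)).2 (2^s) hpos h
  rw [z_two] at this
  have h3 : (3:ℕ) ∣ 2 := Nat.Prime.dvd_of_dvd_pow (by norm_num) this
  omega

lemma split_dvd (t d : ℕ) (hd : d ∣ 3*2^(t+1)) (hne : d ≠ 3*2^(t+1)) :
    d ∣ 3*2^t ∨ d ∣ 2^(t+1) := by
  by_cases h3 : 3 ∣ d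
  · left
    obtain ⟨e, rfl⟩ := h3
    have he : e ∣ 2^(t+1) :=
      (mul_dvd_mul_iff_left (by norm_num : (3:ℕ) ≠ 0)).mp hd
    obtain ⟨i, hi, rfl⟩ := (Nat.dvd_prime_pow Nat.prime_two).mp he
    have hi' : i ≠ t+1 := by rintro rfl; exact hne rfl
    exact mul_dvd_mul_left 3 (pow_dvd_pow 2 (by omega))
  · right
    have hcop : Nat.Coprime d 3 :=
      (Nat.coprime_comm.mpr ((Nat.prime_three.coprime_iff_not_dvd).mpr h3))
    rw [mul_comm] at hd
    exact hcop.dvd_of_dvd_mul_right hd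

lemma z_two_pow (s : ℕ) : z (2^(s+4)) = 3*2^(s+2) := by
  apply z_eq _ _ (3*2^(s+1)) (2^(s+2))
  · positivity
  · exact two_pow_dvd (s+1)
  · exact split_dvd (s+1)
  · intro h
    exact not_two_pow_dvd s (dvd_trans (pow_dvd_pow 2 (by omega)) h)
  · intro h
    exact fib_pow_two_odd (s+2) ((dvd_pow_self 2 (by omega : s+4 ≠ 0)).trans h)

lemma z_three_two_pow (s : ℕ) : z (3*2^(s+4)) = 3*2^(s+2) := by
  apply z_eq _ _ (3*2^(s+1)) (2^(s+2))
  · positivity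
  · have h2 : 2^(s+4) ∣ Nat.fib (3*2^(s+2)) := by
      have := two_pow_dvd (s+1)
      simpa [show s+1+3 = s+4 from rfl, show s+1+1 = s+2 from rfl] using this
    have h3 : (3:ℕ) ∣ Nat.fib (3*2^(s+2)) := by
      have h4 : (4:ℕ) ∣ 3*2^(s+2) := ⟨3*2^s, by ring⟩
      have := Nat.fib_dvd 4 (3*2^(s+2)) h4
      simpa [show Nat.fib 4 = 3 from by decide] using this
    have hcop : Nat.Coprime 3 (2^(s+4)) :=
      Nat.Coprime.pow_right _ (by norm_num)
    exact hcop.mul_dvd_of_dvd_of_dvd h3 h2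
  · exact split_dvd (s+1)
  · intro h
    exact not_two_pow_dvd s ((dvd_mul_left (2^(s+4)) 3).trans h)
  · intro h
    exact fib_pow_two_odd (s+2) ((show (2:ℕ) ∣ 3*2^(s+4) from ⟨3*2^(s+3), by ring⟩).trans h)

lemma split12 : ∀ d : ℕ, d ∣ 12 → d ≠ 12 → d ∣ 6 ∨ d ∣ 4 := by
  intro d hd hne
  have := Nat.le_of_dvd (by norm_num) hd
  interval_cases d <;> first | (revert hd; decide) | (exact absurd rfl hne)

lemma z_three : z 3 = 4 := by
  apply z_eq 3 4 2 2
  · norm_num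
  · decide
  · intro d hd hne
    have := Nat.le_of_dvd (by norm_num) hd
    interval_cases d <;> first | (revert hd; decide) | (exact absurd rfl hne)
  · decide
  · decide

lemma split6 : ∀ d : ℕ, d ∣ 6 → d ≠ 6 → d ∣ 3 ∨ d ∣ 2 := by
  intro d hd hne
  have := Nat.le_of_dvd (by norm_num) hd
  interval_cases d <;> first | (revert hd; decide) | (exact absurd rfl hne)

lemma z_four : z 4 = 6 := by
  apply z_eq 4 6 3 2
  · norm_num
  · decide
  · exact split6
  · decide
  · decide

lemma z_eight : z 8 = 6 := by
  apply z_eq 8 6 3 2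
  · norm_num
  · decide
  · exact split6
  · decide
  · decide

lemma z_six : z 6 = 12 := by
  apply z_eq 6 12 6 4
  · norm_num
  · decide
  · exact split12
  · decide
  · decide

lemma z_twelve : z 12 = 12 := by
  apply z_eq 12 12 6 4
  · norm_num
  · decide
  · exact split12
  · decide
  · decide

lemma z_twentyfour : z 24 = 12 := by
  apply z_eq 24 12 6 4
  · norm_num
  · decide
  · exact split12
  · decide
  · decide

lemma reach (b : ℕ) (hb : 1 ≤ b) : ∃ k : ℕ, z^[k] (3 * 2^b) = 12 := by
  induction b using Nat.strong_induction_on with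
  | _ b ih =>
    match b, hb with
    | 1, _ => exact ⟨1, by simpa using z_six⟩
    | 2, _ => exact ⟨0, by norm_num⟩
    | 3, _ => exact ⟨1, by simpa using z_twentyfour⟩
    | (s+4), _ =>
      obtain ⟨k, hk⟩ := ih (s+2) (by omega) (by omega)
      refine ⟨k+1, ?_⟩
      rw [Function.iterate_succ_apply, z_three_two_pow s, hk]

theorem two_pow_reaches_twelve (a : ℕ) (ha : 0 < a) :
    ∃ k : ℕ, z^[k] (2 ^ a) = 12 := by
  match a, ha with
  | 1, _ =>
    refine ⟨4, ?_⟩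
    have e1 : (2:ℕ)^1 = 2 := by norm_num
    rw [e1, show (4:ℕ) = 3+1 from rfl, Function.iterate_succ_apply, z_two,
      show (3:ℕ) = 2+1 from rfl, Function.iterate_succ_apply, z_three,
      show (2:ℕ) = 1+1 from rfl, Function.iterate_succ_apply, z_four,
      Function.iterate_succ_apply, z_six, Function.iterate_zero_apply]
  | 2, _ =>
    refine ⟨2, ?_⟩
    rw [show (2:ℕ)^2 = 4 from by norm_num, show (2:ℕ) = 1+1 from rfl,
      Function.iterate_succ_apply, z_four, Function.iterate_succ_apply, z_six,
      Function.iterate_zero_apply]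
  | 3, _ =>
    refine ⟨2, ?_⟩
    rw [show (2:ℕ)^3 = 8 from by norm_num, show (2:ℕ) = 1+1 from rfl,
      Function.iterate_succ_apply, z_eight, Function.iterate_succ_apply, z_six,
      Function.iterate_zero_apply]
  | (s+4), _ =>
    obtain ⟨k, hk⟩ := reach (s+2) (by omega)
    refine ⟨k+1, ?_⟩
    rw [Function.iterate_succ_apply, z_two_pow s, hk]
end
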